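/- In the MICD AL model, E_0[a_θ(X,Y)] = θ³/12 and E_θ[a_θ(X,Y)] = (3-θ)θ²/12 for θ ∈ (0,1), so the ratio E_θ[a_θ(X,Y)]/E_0[a_θ(X,Y)] = (3-θ)/θ → ∞ as θ ↓ 0. -/

import Mathlib

open MeasureTheory Set Filter Topology

/-- The MICD AL model for `θ ∈ (0,1)`: the mixture whose expectation is
`E_θ g(X,Y) = (1/(1-θ))·∫∫_{[-1/2,1/2]²} g(u,v)·1{|u|∧|v| > θ/2} du dv
 + ∫_{-θ/2}^{θ/2} g(u,u) du`. -/
noncomputable def ALmeasure (θ : ℝ) : Measure (ℝ × ℝ) :=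
  (ENNReal.ofReal (1 - θ))⁻¹ •
    volume.restrict {p : ℝ × ℝ | p.1 ∈ Icc (-(1/2):ℝ) (1/2) ∧ p.2 ∈ Icc (-(1/2):ℝ) (1/2)
      ∧ θ/2 < |p.1| ∧ θ/2 < |p.2|}
  + Measure.map (fun u : ℝ => (u, u)) (volume.restrict (Icc (-(θ/2)) (θ/2)))

/-- The independence (θ = 0) measure: uniform on `[-1/2,1/2]²`. -/
noncomputable def ALmeasure0 : Measure (ℝ × ℝ) :=
  volume.restrict (Icc (-(1/2):ℝ) (1/2) ×ˢ Icc (-(1/2):ℝ) (1/2))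

/-- The association function `a_θ = F_θ - F_0` of the MICD AL model. -/
noncomputable def ALassoc (θ : ℝ) (p : ℝ × ℝ) : ℝ :=
  (ALmeasure θ (Iic p.1 ×ˢ Iic p.2)).toReal - (ALmeasure0 (Iic p.1 ×ˢ Iic p.2)).toReal


open intervalIntegral in
lemma myid (a b : ℝ) : ∫ x in a..b, (x:ℝ) = (b^2-a^2)/2 := integral_id

open intervalIntegral in
lemma mypow (a b : ℝ) : ∫ x in a..b, (x:ℝ)^2 = (b^3-a^3)/3 := by
  rw [integral_pow]
  norm_num


noncomputable def Hf (θ t : ℝ) : ℝ := max (min t (θ/2) + θ/2) 0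

lemma Hf_nonneg (θ t : ℝ) : 0 ≤ Hf θ t := le_max_right _ _

lemma Hf_le (θ : ℝ) (h0 : 0 ≤ θ) (t : ℝ) : Hf θ t ≤ θ := by
  unfold Hf
  have := min_le_right t (θ/2)
  exact max_le (by linarith) h0

lemma Hf_mono (θ : ℝ) : Monotone (Hf θ) := by
  intro a b h
  unfold Hf
  exact max_le_max (add_le_add_left (min_le_min h le_rfl) _) le_rfl

@[fun_prop]
lemma Hf_cont (θ : ℝ) : Continuous (Hf θ) := by
  unfold Hf
  exact (((continuous_id.min continuous_const).add continuous_const).max continuous_const)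

lemma Hf_left {θ t : ℝ} (h : t ≤ -(θ/2)) : Hf θ t = 0 := by
  unfold Hf
  have := min_le_left t (θ/2)
  exact max_eq_right (by linarith)

lemma Hf_mid {θ t : ℝ} (h1 : -(θ/2) ≤ t) (h2 : t ≤ θ/2) : Hf θ t = t + θ/2 := by
  unfold Hf
  rw [min_eq_left h2]
  exact max_eq_left (by linarith)

lemma Hf_right {θ t : ℝ} (h0 : 0 ≤ θ) (h : θ/2 ≤ t) : Hf θ t = θ := by
  unfold Hf
  rw [min_eq_right h, max_eq_left (by linarith)]
  ring

lemma Hf_le_linear {θ t : ℝ} (h1 : θ ≤ 1) (ht : -(1/2) ≤ t) : Hf θ t ≤ t + 1/2 := by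
  unfold Hf
  have := min_le_left t (θ/2)
  exact max_le (by linarith) (by linarith)

lemma ofReal_Hf (θ t : ℝ) :
    ENNReal.ofReal (min t (θ/2) + θ/2) = ENNReal.ofReal (Hf θ t) := by
  unfold Hf
  rcases le_total (min t (θ/2) + θ/2) 0 with h | h
  · rw [max_eq_right h, ENNReal.ofReal_of_nonpos h, ENNReal.ofReal_zero]
  · rw [max_eq_left h]

lemma ipoly (a b c0 c1 c2 : ℝ) :
    ∫ y in a..b, (c0 + c1*y + c2*y^2) =
      c0*(b-a) + c1*(b^2-a^2)/2 + c2*(b^3-a^3)/3 := by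
  have h1 : ∫ y in a..b, (c0 + c1*y + c2*y^2)
      = (∫ y in a..b, c0) + ((∫ y in a..b, c1*y) + ∫ y in a..b, c2*y^2) := by
    rw [← intervalIntegral.integral_add (Continuous.intervalIntegrable (by fun_prop) _ _)
        (Continuous.intervalIntegrable (by fun_prop) _ _)]
    rw [← intervalIntegral.integral_add (Continuous.intervalIntegrable (by fun_prop) _ _)
        (Continuous.intervalIntegrable (by fun_prop) _ _)]
    congr 1
    funext y
    ring
  rw [h1, intervalIntegral.integral_const, intervalIntegral.integral_const_mul,
    intervalIntegral.integral_const_mul, myid, mypow, smul_eq_mul]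
  ring

noncomputable def fA (θ : ℝ) (p : ℝ × ℝ) : ℝ :=
  (p.1 + 1/2 - Hf θ p.1) * (p.2 + 1/2 - Hf θ p.2) / (1-θ)
    + min (Hf θ p.1) (Hf θ p.2) - (p.1 + 1/2) * (p.2 + 1/2)

@[fun_prop]
lemma fA_cont (θ : ℝ) : Continuous (fA θ) := by
  unfold fA
  fun_prop

lemma Gf_nonneg {θ t : ℝ} (h1 : θ ≤ 1) (ht : -(1/2) ≤ t) : 0 ≤ t + 1/2 - Hf θ t := by
  have := Hf_le_linear (t := t) h1 ht
  linarith

lemma volA {θ : ℝ} (h0 : 0 < θ) (h1 : θ < 1) {t : ℝ} (ht : t ∈ Icc (-(1/2):ℝ) (1/2)) :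
    volume {u : ℝ | u ∈ Icc (-(1/2):ℝ) (1/2) ∧ u ≤ t ∧ θ/2 < |u|}
      = ENNReal.ofReal (t + 1/2 - Hf θ t) := by
  obtain ⟨ht1, ht2⟩ := ht
  have hset : {u : ℝ | u ∈ Icc (-(1/2):ℝ) (1/2) ∧ u ≤ t ∧ θ/2 < |u|}
      = Icc (-(1/2)) t \ Icc (-(θ/2)) (min t (θ/2)) := by
    ext u
    simp only [mem_setOf_eq, mem_Icc, mem_diff]
    constructor
    · rintro ⟨⟨hu1, hu2⟩, hu3, hu4⟩
      refine ⟨⟨hu1, hu3⟩, ?_⟩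
      rintro ⟨ha, hb⟩
      have : |u| ≤ θ/2 := abs_le.mpr ⟨by linarith, le_trans hb (min_le_right _ _)⟩
      linarith
    · rintro ⟨⟨hu1, hu3⟩, hnot⟩
      refine ⟨⟨hu1, le_trans hu3 ht2⟩, hu3, ?_⟩
      by_contra hle
      push_neg at hle
      rcases abs_le.mp hle with ⟨ha, hb⟩
      exact hnot ⟨by linarith, le_min hu3 hb⟩
  rw [hset, measure_diff (Icc_subset_Icc (by linarith) (min_le_left _ _))
      measurableSet_Icc.nullMeasurableSet measure_Icc_lt_top.ne,
    Real.volume_Icc, Real.volume_Icc,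
    show min t (θ/2) - -(θ/2) = min t (θ/2) + θ/2 by ring,
    ofReal_Hf, ← ENNReal.ofReal_sub _ (Hf_nonneg _ _)]
  congr 1
  ring

lemma cdf0 {x y : ℝ} (hx : x ∈ Icc (-(1/2):ℝ) (1/2)) (hy : y ∈ Icc (-(1/2):ℝ) (1/2)) :
    (ALmeasure0 (Iic x ×ˢ Iic y)).toReal = (x + 1/2) * (y + 1/2) := by
  have hIx : Iic x ∩ Icc (-(1/2):ℝ) (1/2) = Icc (-(1/2)) x := by
    ext u; simp only [mem_inter_iff, mem_Iic, mem_Icc]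
    constructor
    · rintro ⟨h, h2, _⟩; exact ⟨h2, h⟩
    · rintro ⟨h2, h⟩; exact ⟨h, h2, le_trans h hx.2⟩
  have hIy : Iic y ∩ Icc (-(1/2):ℝ) (1/2) = Icc (-(1/2)) y := by
    ext u; simp only [mem_inter_iff, mem_Iic, mem_Icc]
    constructor
    · rintro ⟨h, h2, _⟩; exact ⟨h2, h⟩
    · rintro ⟨h2, h⟩; exact ⟨h, h2, le_trans h hy.2⟩
  rw [ALmeasure0, Measure.restrict_apply (measurableSet_Iic.prod measurableSet_Iic),
    prod_inter_prod, hIx, hIy, Measure.volume_eq_prod, Measure.prod_prod,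
    Real.volume_Icc, Real.volume_Icc,
    ← ENNReal.ofReal_mul (by linarith [hx.1]),
    ENNReal.toReal_ofReal (mul_nonneg (by linarith [hx.1]) (by linarith [hy.1]))]
  ring

lemma cdfth {θ : ℝ} (h0 : 0 < θ) (h1 : θ < 1) {x y : ℝ}
    (hx : x ∈ Icc (-(1/2):ℝ) (1/2)) (hy : y ∈ Icc (-(1/2):ℝ) (1/2)) :
    (ALmeasure θ (Iic x ×ˢ Iic y)).toReal
      = (x + 1/2 - Hf θ x) * (y + 1/2 - Hf θ y) / (1-θ) + Hf θ (min x y) := by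
  have hS : MeasurableSet (Iic x ×ˢ Iic y : Set (ℝ×ℝ)) :=
    measurableSet_Iic.prod measurableSet_Iic
  have hdiag : Measurable (fun u : ℝ => (u, u)) := measurable_id.prodMk measurable_id
  have hinter : (Iic x ×ˢ Iic y) ∩ {p : ℝ × ℝ | p.1 ∈ Icc (-(1/2):ℝ) (1/2)
        ∧ p.2 ∈ Icc (-(1/2):ℝ) (1/2) ∧ θ/2 < |p.1| ∧ θ/2 < |p.2|}
      = {u : ℝ | u ∈ Icc (-(1/2):ℝ) (1/2) ∧ u ≤ x ∧ θ/2 < |u|}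
          ×ˢ {u : ℝ | u ∈ Icc (-(1/2):ℝ) (1/2) ∧ u ≤ y ∧ θ/2 < |u|} := by
    ext ⟨a, b⟩
    simp only [mem_inter_iff, mem_prod, mem_Iic, mem_setOf_eq]
    tauto
  have hpre : (fun u : ℝ => (u, u)) ⁻¹' (Iic x ×ˢ Iic y) = Iic (min x y) := by
    ext u
    simp [le_min_iff]
  have hpre2 : Iic (min x y) ∩ Icc (-(θ/2)) (θ/2) = Icc (-(θ/2)) (min (min x y) (θ/2)) := by
    ext u
    simp only [mem_inter_iff, mem_Iic, mem_Icc, le_min_iff]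
    tauto
  rw [ALmeasure, Measure.add_apply, Measure.smul_apply,
    Measure.restrict_apply hS, Measure.map_apply hdiag hS,
    Measure.restrict_apply (hdiag hS), hinter, hpre, hpre2,
    Measure.volume_eq_prod, Measure.prod_prod, volA h0 h1 hx, volA h0 h1 hy,
    Real.volume_Icc,
    show min (min x y) (θ/2) - -(θ/2) = min (min x y) (θ/2) + θ/2 by ring,
    ofReal_Hf, smul_eq_mul]
  rw [ENNReal.toReal_add (ENNReal.mul_ne_top
      (ENNReal.inv_ne_top.mpr (ENNReal.ofReal_pos.mpr (by linarith)).ne')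
      (ENNReal.mul_ne_top ENNReal.ofReal_ne_top ENNReal.ofReal_ne_top))
      ENNReal.ofReal_ne_top,
    ENNReal.toReal_mul, ENNReal.toReal_mul, ENNReal.toReal_inv,
    ENNReal.toReal_ofReal (by linarith : (0:ℝ) ≤ 1 - θ),
    ENNReal.toReal_ofReal (Gf_nonneg h1.le hx.1),
    ENNReal.toReal_ofReal (Gf_nonneg h1.le hy.1),
    ENNReal.toReal_ofReal (Hf_nonneg _ _)]
  ring

lemma assoc_eq {θ : ℝ} (h0 : 0 < θ) (h1 : θ < 1) {p : ℝ × ℝ}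
    (hp1 : p.1 ∈ Icc (-(1/2):ℝ) (1/2)) (hp2 : p.2 ∈ Icc (-(1/2):ℝ) (1/2)) :
    ALassoc θ p = fA θ p := by
  rw [ALassoc, cdfth h0 h1 hp1 hp2, cdf0 hp1 hp2, fA, (Hf_mono θ).map_min]

lemma icc_to_ii {a b : ℝ} (h : a ≤ b) (f : ℝ → ℝ) :
    ∫ y in Icc a b, f y = ∫ y in a..b, f y := by
  rw [integral_Icc_eq_integral_Ioc, intervalIntegral.integral_of_le h]

lemma KK {θ : ℝ} (h0 : 0 < θ) (h1 : θ < 1) {x : ℝ} (hx : x ∈ Icc (-(1/2):ℝ) (1/2)) :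
    ∫ y in (-(1/2):ℝ)..x, Hf θ y = (Hf θ x)^2/2 + θ * max (x - θ/2) 0 := by
  obtain ⟨hx1, hx2⟩ := hx
  rcases le_or_gt x (-(θ/2)) with hc | hc
  · rw [intervalIntegral.integral_congr (g := fun y => (0:ℝ) + 0*y + 0*y^2) (by
      intro y hy
      rw [uIcc_of_le (by linarith)] at hy
      simp only [Hf_left (le_trans hy.2 hc)]
      ring)]
    rw [ipoly, Hf_left hc, max_eq_right (by linarith : x - θ/2 ≤ 0)]
    ring
  · rcases le_or_gt x (θ/2) with hc2 | hc2
    · rw [← intervalIntegral.integral_add_adjacent_intervals (b := -(θ/2))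
        ((Hf_cont θ).intervalIntegrable _ _) ((Hf_cont θ).intervalIntegrable _ _)]
      rw [intervalIntegral.integral_congr (a := (-(1/2):ℝ)) (b := -(θ/2))
        (g := fun y => (0:ℝ) + 0*y + 0*y^2) (by
          intro y hy
          rw [uIcc_of_le (by linarith)] at hy
          simp only [Hf_left hy.2]
          ring)]
      rw [intervalIntegral.integral_congr (a := (-(θ/2):ℝ)) (b := x)
        (g := fun y => θ/2 + 1*y + 0*y^2) (by
          intro y hy
          rw [uIcc_of_le (by linarith)] at hy
          simp only [Hf_mid hy.1 (le_trans hy.2 hc2)]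
          ring)]
      rw [ipoly, ipoly, Hf_mid hc.le hc2, max_eq_right (by linarith : x - θ/2 ≤ 0)]
      ring
    · rw [← intervalIntegral.integral_add_adjacent_intervals (b := θ/2)
        ((Hf_cont θ).intervalIntegrable _ _) ((Hf_cont θ).intervalIntegrable _ _)]
      rw [← intervalIntegral.integral_add_adjacent_intervals (a := (-(1/2):ℝ)) (b := -(θ/2))
        ((Hf_cont θ).intervalIntegrable _ _) ((Hf_cont θ).intervalIntegrable _ _)]
      rw [intervalIntegral.integral_congr (a := (-(1/2):ℝ)) (b := -(θ/2))
        (g := fun y => (0:ℝ) + 0*y + 0*y^2) (by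
          intro y hy
          rw [uIcc_of_le (by linarith)] at hy
          simp only [Hf_left hy.2]
          ring)]
      rw [intervalIntegral.integral_congr (a := (-(θ/2):ℝ)) (b := θ/2)
        (g := fun y => θ/2 + 1*y + 0*y^2) (by
          intro y hy
          rw [uIcc_of_le (by linarith)] at hy
          simp only [Hf_mid hy.1 hy.2]
          ring)]
      rw [intervalIntegral.integral_congr (a := θ/2) (b := x)
        (g := fun y => θ + 0*y + 0*y^2) (by
          intro y hy
          rw [uIcc_of_le (by linarith)] at hy
          simp only [Hf_right h0.le hy.1]
          ring)]
      rw [ipoly, ipoly, ipoly, Hf_right h0.le hc2.le, max_eq_left (by linarith : 0 ≤ x - θ/2)]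
      ring

lemma Mlem {θ : ℝ} (h0 : 0 < θ) (h1 : θ < 1) {x : ℝ} (hx : x ∈ Icc (-(1/2):ℝ) (1/2)) :
    ∫ y in Icc (-(1/2):ℝ) (1/2), min (Hf θ x) (Hf θ y)
      = (Hf θ x)^2/2 + θ * max (x - θ/2) 0 + Hf θ x * (1/2 - x) := by
  obtain ⟨hx1, hx2⟩ := hx
  rw [icc_to_ii (by linarith)]
  rw [← intervalIntegral.integral_add_adjacent_intervals (b := x)
      (Continuous.intervalIntegrable (by fun_prop) _ _)
      (Continuous.intervalIntegrable (by fun_prop) _ _)]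
  rw [intervalIntegral.integral_congr (a := (-(1/2):ℝ)) (b := x) (g := Hf θ) (by
      intro y hy
      rw [uIcc_of_le hx1] at hy
      exact min_eq_right (Hf_mono θ hy.2))]
  rw [intervalIntegral.integral_congr (a := x) (b := (1/2:ℝ)) (g := fun _ => Hf θ x) (by
      intro y hy
      rw [uIcc_of_le hx2] at hy
      exact min_eq_left (Hf_mono θ hy.1))]
  rw [KK h0 h1 ⟨hx1, hx2⟩, intervalIntegral.integral_const, smul_eq_mul]
  ring

lemma master {θ : ℝ} (h0 : 0 < θ) (h1 : θ < 1) (c0 c1 d0 d1 e k : ℝ) :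
    ∫ y in Icc (-(1/2):ℝ) (1/2),
        (c0 + c1*y + (d0 + d1*y) * Hf θ y + e * (Hf θ y)^2 + k * max (y - θ/2) 0)
      = c0 + d0*(θ/2) + d1*(θ/8 - θ^3/24) + e*(θ^3/3 + θ^2*(1-θ)/2) + k*((1-θ)^2/8) := by
  have hI : ∀ a b : ℝ, IntervalIntegrable (fun y =>
      c0 + c1*y + (d0 + d1*y) * Hf θ y + e * (Hf θ y)^2 + k * max (y - θ/2) 0) volume a b :=
    fun a b => Continuous.intervalIntegrable (by fun_prop) _ _
  rw [icc_to_ii (by linarith)]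
  rw [← intervalIntegral.integral_add_adjacent_intervals (a := (-(1/2):ℝ)) (b := -(θ/2))
      (c := 1/2) (hI _ _) (hI _ _)]
  rw [← intervalIntegral.integral_add_adjacent_intervals (a := (-(θ/2):ℝ)) (b := θ/2)
      (c := 1/2) (hI _ _) (hI _ _)]
  rw [intervalIntegral.integral_congr (a := (-(1/2):ℝ)) (b := -(θ/2))
    (g := fun y => c0 + c1*y + 0*y^2) (by
      intro y hy
      rw [uIcc_of_le (by linarith)] at hy
      simp only [Hf_left hy.2, max_eq_right (by linarith [hy.2, h0] : y - θ/2 ≤ 0)]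
      ring)]
  rw [intervalIntegral.integral_congr (a := (-(θ/2):ℝ)) (b := θ/2)
    (g := fun y => (c0 + d0*(θ/2) + e*(θ^2/4)) + (c1 + d0 + d1*(θ/2) + e*θ)*y + (d1 + e)*y^2) (by
      intro y hy
      rw [uIcc_of_le (by linarith)] at hy
      simp only [Hf_mid hy.1 hy.2, max_eq_right (by linarith [hy.2] : y - θ/2 ≤ 0)]
      ring)]
  rw [intervalIntegral.integral_congr (a := (θ/2:ℝ)) (b := 1/2)
    (g := fun y => (c0 + d0*θ + e*θ^2 - k*(θ/2)) + (c1 + d1*θ + k)*y + 0*y^2) (by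
      intro y hy
      rw [uIcc_of_le (by linarith)] at hy
      simp only [Hf_right h0.le hy.1, max_eq_left (by linarith [hy.1] : 0 ≤ y - θ/2)]
      ring)]
  rw [ipoly, ipoly, ipoly]
  ring

lemma SintG {θ : ℝ} (h0 : 0 < θ) (h1 : θ < 1) :
    ∫ y in Icc (-(1/2):ℝ) (1/2), (y + 1/2 - Hf θ y) = (1-θ)/2 := by
  rw [setIntegral_congr_fun measurableSet_Icc
    (g := fun y => 1/2 + 1*y + (-1 + 0*y) * Hf θ y + 0 * (Hf θ y)^2 + 0 * max (y - θ/2) 0)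
    (fun y _ => by ring)]
  rw [master h0 h1]
  ring

lemma SintF {θ : ℝ} (h0 : 0 < θ) (h1 : θ < 1) :
    ∫ y in Icc (-(1/2):ℝ) (1/2), (y + 1/2) = 1/2 := by
  rw [setIntegral_congr_fun measurableSet_Icc
    (g := fun y => 1/2 + 1*y + (0 + 0*y) * Hf θ y + 0 * (Hf θ y)^2 + 0 * max (y - θ/2) 0)
    (fun y _ => by ring)]
  rw [master h0 h1]
  ring

lemma SintH {θ : ℝ} (h0 : 0 < θ) (h1 : θ < 1) :
    ∫ y in Icc (-(1/2):ℝ) (1/2), Hf θ y = θ/2 := by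
  rw [setIntegral_congr_fun measurableSet_Icc
    (g := fun y => 0 + 0*y + (1 + 0*y) * Hf θ y + 0 * (Hf θ y)^2 + 0 * max (y - θ/2) 0)
    (fun y _ => by ring)]
  rw [master h0 h1]
  ring

lemma midG {θ : ℝ} (h0 : 0 < θ) (h1 : θ < 1) :
    ∫ y in Icc (-(θ/2)) (θ/2), (y + 1/2 - Hf θ y) = (θ - θ^2)/2 := by
  rw [icc_to_ii (by linarith)]
  rw [intervalIntegral.integral_congr (g := fun y => (1/2 - θ/2) + 0*y + 0*y^2) (by
      intro y hy
      rw [uIcc_of_le (by linarith)] at hy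
      simp only [Hf_mid hy.1 hy.2]
      ring)]
  rw [ipoly]
  ring

lemma midF {θ : ℝ} (h0 : 0 < θ) (h1 : θ < 1) :
    ∫ y in Icc (-(θ/2)) (θ/2), (y + 1/2) = θ/2 := by
  rw [icc_to_ii (by linarith)]
  rw [intervalIntegral.integral_congr (g := fun y => 1/2 + 1*y + 0*y^2) (fun y _ => by ring)]
  rw [ipoly]
  ring

lemma midH {θ : ℝ} (h0 : 0 < θ) (h1 : θ < 1) :
    ∫ y in Icc (-(θ/2)) (θ/2), Hf θ y = θ^2/2 := by
  rw [icc_to_ii (by linarith)]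
  rw [intervalIntegral.integral_congr (g := fun y => θ/2 + 1*y + 0*y^2) (by
      intro y hy
      rw [uIcc_of_le (by linarith)] at hy
      simp only [Hf_mid hy.1 hy.2]
      ring)]
  rw [ipoly]
  ring

noncomputable def Bs (θ : ℝ) : Set ℝ := Icc (-(1/2):ℝ) (1/2) \ Icc (-(θ/2)) (θ/2)

lemma Bs_meas (θ : ℝ) : MeasurableSet (Bs θ) := measurableSet_Icc.diff measurableSet_Icc

lemma Bs_subset (θ : ℝ) : Bs θ ⊆ Icc (-(1/2):ℝ) (1/2) := diff_subset

lemma intB {θ : ℝ} (h0 : 0 < θ) (h1 : θ < 1) {g : ℝ → ℝ} (hg : Continuous g) :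
    ∫ y in Bs θ, g y = (∫ y in Icc (-(1/2):ℝ) (1/2), g y) - ∫ y in Icc (-(θ/2)) (θ/2), g y := by
  exact integral_diff measurableSet_Icc (hg.integrableOn_Icc)
    (Icc_subset_Icc (by linarith) (by linarith))

lemma SB1 {θ : ℝ} (h0 : 0 < θ) (h1 : θ < 1) :
    ∫ y in Bs θ, (y + 1/2 - Hf θ y) = (1-θ)^2/2 := by
  rw [intB h0 h1 (by fun_prop), SintG h0 h1, midG h0 h1]
  ring

lemma SB2 {θ : ℝ} (h0 : 0 < θ) (h1 : θ < 1) :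
    ∫ y in Bs θ, (y + 1/2) = (1-θ)/2 := by
  rw [intB h0 h1 (by fun_prop), SintF h0 h1, midF h0 h1]
  ring

lemma SBH {θ : ℝ} (h0 : 0 < θ) (h1 : θ < 1) :
    ∫ y in Bs θ, Hf θ y = (θ - θ^2)/2 := by
  rw [intB h0 h1 (by fun_prop), SintH h0 h1, midH h0 h1]
  ring

lemma mB {θ : ℝ} (h0 : 0 < θ) (h1 : θ < 1) {x : ℝ} (hx : x ∈ Bs θ) :
    ∫ y in Bs θ, min (Hf θ x) (Hf θ y) = Hf θ x * ((1-θ)/2) := by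
  have hx2 := hx.2
  rw [mem_Icc, not_and_or, not_le, not_le] at hx2
  rcases hx2 with hc | hc
  · rw [Hf_left hc.le]
    rw [setIntegral_congr_fun (Bs_meas θ) (g := fun _ => (0:ℝ))
      (fun y _ => min_eq_left (Hf_nonneg _ _))]
    simp
  · rw [Hf_right h0.le hc.le]
    rw [setIntegral_congr_fun (Bs_meas θ) (g := fun y => Hf θ y)
      (fun y _ => min_eq_right (Hf_le θ h0.le y))]
    rw [SBH h0 h1]
    ring

lemma notmid_iff {θ a : ℝ} : a ∉ Icc (-(θ/2)) (θ/2) ↔ θ/2 < |a| := by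
  rw [mem_Icc, not_and_or, not_le, not_le]
  constructor
  · rintro (h | h)
    · exact lt_of_lt_of_le (by linarith) (neg_le_abs a)
    · exact lt_of_lt_of_le h (le_abs_self a)
  · intro h
    rcases abs_cases a with ⟨he, _⟩ | ⟨he, _⟩
    · right; linarith [he ▸ h]
    · left; linarith [he ▸ h]

lemma sq_int {θ : ℝ} : IntegrableOn (fA θ)
    (Icc (-(1/2):ℝ) (1/2) ×ˢ Icc (-(1/2):ℝ) (1/2)) volume :=
  ContinuousOn.integrableOn_compact (isCompact_Icc.prod isCompact_Icc) (fA_cont θ).continuousOn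

lemma E0val {θ : ℝ} (h0 : 0 < θ) (h1 : θ < 1) :
    ∫ p, ALassoc θ p ∂ALmeasure0 = θ^3/12 := by
  have msq : MeasurableSet (Icc (-(1/2):ℝ) (1/2) ×ˢ Icc (-(1/2):ℝ) (1/2)) :=
    measurableSet_Icc.prod measurableSet_Icc
  have hIntSq : IntegrableOn (fA θ)
      (Icc (-(1/2):ℝ) (1/2) ×ˢ Icc (-(1/2):ℝ) (1/2)) (volume.prod volume) := by
    rw [← Measure.volume_eq_prod]
    exact sq_int
  rw [ALmeasure0]
  rw [setIntegral_congr_fun msq (g := fA θ) (fun p hp => assoc_eq h0 h1 hp.1 hp.2)]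
  rw [Measure.volume_eq_prod, setIntegral_prod _ hIntSq]
  have hinner : EqOn (fun x => ∫ y in Icc (-(1/2):ℝ) (1/2), fA θ (x, y))
      (fun x => (x + 1/2 - Hf θ x)/(1-θ) * ((1-θ)/2)
        + ((Hf θ x)^2/2 + θ * max (x - θ/2) 0 + Hf θ x * (1/2 - x))
        - (x + 1/2) * (1/2)) (Icc (-(1/2):ℝ) (1/2)) := by
    intro x hx
    simp only
    rw [setIntegral_congr_fun measurableSet_Icc (g := fun y =>
          (x + 1/2 - Hf θ x)/(1-θ) * (y + 1/2 - Hf θ y)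
          + (min (Hf θ x) (Hf θ y) - (x + 1/2) * (y + 1/2)))
        (fun y _ => by
          show (x + 1/2 - Hf θ x) * (y + 1/2 - Hf θ y)/(1-θ)
              + min (Hf θ x) (Hf θ y) - (x + 1/2) * (y + 1/2)
            = (x + 1/2 - Hf θ x)/(1-θ) * (y + 1/2 - Hf θ y)
              + (min (Hf θ x) (Hf θ y) - (x + 1/2) * (y + 1/2))
          ring)]
    have i1 : IntegrableOn (fun y => (x + 1/2 - Hf θ x)/(1-θ) * (y + 1/2 - Hf θ y))
        (Icc (-(1/2):ℝ) (1/2)) volume := Continuous.integrableOn_Icc (by fun_prop)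
    have i2 : IntegrableOn (fun y => min (Hf θ x) (Hf θ y))
        (Icc (-(1/2):ℝ) (1/2)) volume := Continuous.integrableOn_Icc (by fun_prop)
    have i3 : IntegrableOn (fun y => (x + 1/2) * (y + 1/2))
        (Icc (-(1/2):ℝ) (1/2)) volume := Continuous.integrableOn_Icc (by fun_prop)
    have e := integral_add i1 (i2.sub i3)
    simp only [Pi.sub_apply] at e
    rw [e, integral_sub i2 i3,
      integral_const_mul, integral_const_mul, SintG h0 h1, SintF h0 h1, Mlem h0 h1 hx]
    ring
  rw [setIntegral_congr_fun measurableSet_Icc hinner]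
  rw [setIntegral_congr_fun measurableSet_Icc (g := fun x =>
      ((((1-θ)/2)/(1-θ))/2 - 1/4) + ((((1-θ)/2)/(1-θ)) - 1/2)*x
        + ((1/2 - (((1-θ)/2)/(1-θ))) + (-1)*x) * Hf θ x
        + (1/2) * (Hf θ x)^2 + θ * max (x - θ/2) 0)
    (fun x _ => by ring)]
  rw [master h0 h1]
  have hne : (1:ℝ) - θ ≠ 0 := by linarith
  field_simp
  ring

lemma Ethval {θ : ℝ} (h0 : 0 < θ) (h1 : θ < 1) :
    ∫ p, ALassoc θ p ∂(ALmeasure θ) = (3 - θ) * θ^2 / 12 := by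
  have msq : MeasurableSet (Icc (-(1/2):ℝ) (1/2) ×ˢ Icc (-(1/2):ℝ) (1/2)) :=
    measurableSet_Icc.prod measurableSet_Icc
  have hdiag : Measurable (fun u : ℝ => (u, u)) := measurable_id.prodMk measurable_id
  have hnull : ALmeasure θ ((Icc (-(1/2):ℝ) (1/2) ×ˢ Icc (-(1/2):ℝ) (1/2))ᶜ) = 0 := by
    rw [ALmeasure, Measure.add_apply, Measure.smul_apply,
      Measure.restrict_apply msq.compl, Measure.map_apply hdiag msq.compl,
      Measure.restrict_apply (hdiag msq.compl)]
    have e1 : (Icc (-(1/2):ℝ) (1/2) ×ˢ Icc (-(1/2):ℝ) (1/2))ᶜ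
        ∩ {p : ℝ × ℝ | p.1 ∈ Icc (-(1/2):ℝ) (1/2) ∧ p.2 ∈ Icc (-(1/2):ℝ) (1/2)
            ∧ θ/2 < |p.1| ∧ θ/2 < |p.2|} = ∅ := by
      apply eq_empty_iff_forall_notMem.mpr
      rintro p ⟨hc, hR⟩
      exact hc ⟨hR.1, hR.2.1⟩
    have e2 : ((fun u : ℝ => (u, u)) ⁻¹'
          (Icc (-(1/2):ℝ) (1/2) ×ˢ Icc (-(1/2):ℝ) (1/2))ᶜ) ∩ Icc (-(θ/2)) (θ/2) = ∅ := by
      apply eq_empty_iff_forall_notMem.mpr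
      rintro u ⟨hpre, hu⟩
      rw [mem_Icc] at hu
      exact hpre ⟨⟨by linarith [hu.1], by linarith [hu.2]⟩,
        ⟨by linarith [hu.1], by linarith [hu.2]⟩⟩
    rw [e1, e2]
    simp
  have hae : ALassoc θ =ᵐ[ALmeasure θ] fA θ := by
    rw [Filter.EventuallyEq, ae_iff]
    apply measure_mono_null _ hnull
    intro p hp
    intro hmem
    exact hp (assoc_eq h0 h1 hmem.1 hmem.2)
  rw [integral_congr_ae hae]
  have hIntR : IntegrableOn (fA θ) {p : ℝ × ℝ | p.1 ∈ Icc (-(1/2):ℝ) (1/2)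
      ∧ p.2 ∈ Icc (-(1/2):ℝ) (1/2) ∧ θ/2 < |p.1| ∧ θ/2 < |p.2|} volume :=
    sq_int.mono_set (fun p hp => ⟨hp.1, hp.2.1⟩)
  have hIntD : Integrable (fA θ)
      (Measure.map (fun u : ℝ => (u, u)) (volume.restrict (Icc (-(θ/2)) (θ/2)))) := by
    refine (integrable_map_measure (fA_cont θ).aestronglyMeasurable hdiag.aemeasurable).mpr ?_
    exact Continuous.integrableOn_Icc (by fun_prop)
  rw [ALmeasure, integral_add_measure
      (hIntR.smul_measure (ENNReal.inv_ne_top.mpr (ENNReal.ofReal_pos.mpr (by linarith)).ne'))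
      hIntD,
    integral_smul_measure, integral_map hdiag.aemeasurable (fA_cont θ).aestronglyMeasurable]
  have hc : ((ENNReal.ofReal (1 - θ))⁻¹).toReal = (1 - θ)⁻¹ := by
    rw [ENNReal.toReal_inv, ENNReal.toReal_ofReal (by linarith)]
  rw [hc]
  have hRB : {p : ℝ × ℝ | p.1 ∈ Icc (-(1/2):ℝ) (1/2) ∧ p.2 ∈ Icc (-(1/2):ℝ) (1/2)
      ∧ θ/2 < |p.1| ∧ θ/2 < |p.2|} = Bs θ ×ˢ Bs θ := by
    ext ⟨a, b⟩
    simp only [mem_setOf_eq, mem_prod, Bs, mem_diff]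
    constructor
    · rintro ⟨ha, hb, h3, h4⟩
      exact ⟨⟨ha, notmid_iff.mpr h3⟩, ⟨hb, notmid_iff.mpr h4⟩⟩
    · rintro ⟨⟨ha, hna⟩, ⟨hb, hnb⟩⟩
      exact ⟨ha, hb, notmid_iff.mp hna, notmid_iff.mp hnb⟩
  rw [hRB]
  have hBB0 : ∫ p in Bs θ ×ˢ Bs θ, fA θ p = 0 := by
    have hIntBB : IntegrableOn (fA θ) (Bs θ ×ˢ Bs θ) (volume.prod volume) := by
      rw [← Measure.volume_eq_prod]
      exact sq_int.mono_set (prod_mono (Bs_subset θ) (Bs_subset θ))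
    rw [Measure.volume_eq_prod, setIntegral_prod _ hIntBB]
    have hinnerB : EqOn (fun x => ∫ y in Bs θ, fA θ (x, y))
        (fun x => (x + 1/2 - Hf θ x)/(1-θ) * ((1-θ)^2/2)
          + Hf θ x * ((1-θ)/2) - (x + 1/2) * ((1-θ)/2)) (Bs θ) := by
      intro x hx
      simp only
      rw [setIntegral_congr_fun (Bs_meas θ) (g := fun y =>
            (x + 1/2 - Hf θ x)/(1-θ) * (y + 1/2 - Hf θ y)
            + (min (Hf θ x) (Hf θ y) - (x + 1/2) * (y + 1/2)))
          (fun y _ => by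
            show (x + 1/2 - Hf θ x) * (y + 1/2 - Hf θ y)/(1-θ)
                + min (Hf θ x) (Hf θ y) - (x + 1/2) * (y + 1/2)
              = (x + 1/2 - Hf θ x)/(1-θ) * (y + 1/2 - Hf θ y)
                + (min (Hf θ x) (Hf θ y) - (x + 1/2) * (y + 1/2))
            ring)]
      have i1 : IntegrableOn (fun y => (x + 1/2 - Hf θ x)/(1-θ) * (y + 1/2 - Hf θ y))
          (Bs θ) volume := (Continuous.integrableOn_Icc (by fun_prop)).mono_set (Bs_subset θ)
      have i2 : IntegrableOn (fun y => min (Hf θ x) (Hf θ y))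
          (Bs θ) volume := (Continuous.integrableOn_Icc (by fun_prop)).mono_set (Bs_subset θ)
      have i3 : IntegrableOn (fun y => (x + 1/2) * (y + 1/2))
          (Bs θ) volume := (Continuous.integrableOn_Icc (by fun_prop)).mono_set (Bs_subset θ)
      have e := integral_add i1 (i2.sub i3)
      simp only [Pi.sub_apply] at e
      rw [e, integral_sub i2 i3,
        integral_const_mul, integral_const_mul, SB1 h0 h1, SB2 h0 h1, mB h0 h1 hx]
      ring
    rw [setIntegral_congr_fun (Bs_meas θ) hinnerB]
    rw [setIntegral_congr_fun (Bs_meas θ) (g := fun x =>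
        (((1-θ)^2/2)/(1-θ)) * (x + 1/2 - Hf θ x) + ((1-θ)/2) * Hf θ x - ((1-θ)/2) * (x + 1/2))
      (fun x _ => by ring)]
    have j1 : IntegrableOn (fun x => (((1-θ)^2/2)/(1-θ)) * (x + 1/2 - Hf θ x))
        (Bs θ) volume := (Continuous.integrableOn_Icc (by fun_prop)).mono_set (Bs_subset θ)
    have j2 : IntegrableOn (fun x => ((1-θ)/2) * Hf θ x)
        (Bs θ) volume := (Continuous.integrableOn_Icc (by fun_prop)).mono_set (Bs_subset θ)
    have j3 : IntegrableOn (fun x => ((1-θ)/2) * (x + 1/2))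
        (Bs θ) volume := (Continuous.integrableOn_Icc (by fun_prop)).mono_set (Bs_subset θ)
    have e := integral_sub (j1.add j2) j3
    simp only [Pi.add_apply] at e
    rw [e, integral_add j1 j2,
      integral_const_mul, integral_const_mul, integral_const_mul,
      SB1 h0 h1, SB2 h0 h1, SBH h0 h1]
    have hne : (1:ℝ) - θ ≠ 0 := by linarith
    field_simp
    ring
  rw [hBB0, smul_zero, zero_add]
  have hdiagval : ∫ u in Icc (-(θ/2)) (θ/2), fA θ (u, u) = (3 - θ) * θ^2 / 12 := by
    rw [icc_to_ii (by linarith)]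
    rw [intervalIntegral.integral_congr (g := fun u =>
        ((1/2 - θ/2) * (1/2 - θ/2)/(1-θ) + θ/2 - 1/4) + 0*u + (-1)*u^2) (by
        intro u hu
        rw [uIcc_of_le (by linarith)] at hu
        show (u + 1/2 - Hf θ u) * (u + 1/2 - Hf θ u)/(1-θ)
            + min (Hf θ u) (Hf θ u) - (u + 1/2) * (u + 1/2)
          = (1/2 - θ/2) * (1/2 - θ/2)/(1-θ) + θ/2 - 1/4 + 0*u + (-1)*u^2
        rw [Hf_mid hu.1 hu.2, min_self]
        ring)]
    rw [ipoly]
    have hne : (1:ℝ) - θ ≠ 0 := by linarith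
    field_simp
    ring
  exact hdiagval

/-- In the MICD AL model, `E_0[a_θ(X,Y)] = θ³/12` and
`E_θ[a_θ(X,Y)] = (3-θ)·θ²/12` for `θ ∈ (0,1)`, so
`E_θ[a_θ]/E_0[a_θ] = (3-θ)/θ → ∞` as `θ ↓ 0`. -/
theorem stmt19 (θ : ℝ) (hθ : θ ∈ Ioo (0:ℝ) 1) :
    (∫ p, ALassoc θ p ∂ALmeasure0 = θ^3 / 12)
    ∧ (∫ p, ALassoc θ p ∂(ALmeasure θ) = (3 - θ) * θ^2 / 12)
    ∧ ((∫ p, ALassoc θ p ∂(ALmeasure θ)) / ∫ p, ALassoc θ p ∂ALmeasure0 = (3 - θ) / θ)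
    ∧ Tendsto (fun t : ℝ => (3 - t) / t) (𝓝[>] (0:ℝ)) atTop := by
  obtain ⟨h0, h1⟩ := hθ
  have e0 := E0val h0 h1
  have e1 := Ethval h0 h1
  refine ⟨e0, e1, ?_, ?_⟩
  · rw [e0, e1]
    have hθ0 : θ ≠ 0 := ne_of_gt h0
    field_simp
  · have h3 : Tendsto (fun t : ℝ => 3 * t⁻¹) (𝓝[>] (0:ℝ)) atTop :=
      Tendsto.const_mul_atTop (by norm_num) tendsto_inv_nhdsGT_zero
    have h4 : Tendsto (fun t : ℝ => 3 * t⁻¹ + (-1)) (𝓝[>] (0:ℝ)) atTop :=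
      tendsto_atTop_add_const_right _ _ h3
    apply h4.congr'
    filter_upwards [self_mem_nhdsWithin] with t ht
    have htne : t ≠ 0 := ne_of_gt ht
    field_simp
    ring
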